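/- For every m ≥ 1, the (2m−1)×(2m−1) matrix N_{2m−1} over ℚ, obtained from the incidence matrix of S_{2m−1} = {y₁,…,y_{2m−1}} by deleting the columns corresponding to the symbols x₁, x₂, x₃, α_{2m−1}, α_{2m}, is invertible. -/

import Mathlib

open scoped BigOperators

/-- Symbols: x₁,x₂,x₃,x₄ are 0,1,2,3 and αⱼ = j+3 (so all symbols are distinct naturals). -/
def α (j : ℕ) : ℕ := j + 3

/-- The points y₁, y₂, y₃, … of the paper's construction. -/
def y : ℕ → Fin 4 → ℕ := fun k =>
  if k = 1 then ![0, 1, 2, 3]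
  else if k = 2 then ![0, 1, α 1, α 2]
  else match k % 4 with
    | 1 => ![0, α (k - 1), α k, α (k + 1)]
    | 2 => ![α (k - 3), 1, α (k - 1), α k]
    | 3 => ![α k, α (k + 1), 2, α (k - 1)]
    | _ => ![α (k - 1), α k, α (k - 3), 3]

/-- u = (u₁,u₂,u₃,u₄) solves equation (1) for f on S. -/
def Solves (S : Set (Fin 4 → ℕ)) (f : (Fin 4 → ℕ) → ℂ) (u : Fin 4 → ℕ → ℂ) : Prop :=
  ∀ p ∈ S, f p = ∑ i, u i (p i)

/-- S is good: every complex function on S decomposes into coordinate functions. -/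
def IsGood (S : Set (Fin 4 → ℕ)) : Prop := ∀ f, ∃ u, Solves S f u

/-- i-th projection of S. -/
def proj (S : Set (Fin 4 → ℕ)) (i : Fin 4) : Set ℕ := (fun p => p i) '' S

/-- B is a boundary set of S: for every f and every prescription U on B,
equation (1) admits a solution agreeing with U on B, unique on the projections of S. -/
def IsBoundary (S : Set (Fin 4 → ℕ)) (B : Set ℕ) : Prop :=
  B ⊆ ⋃ i, proj S i ∧
  ∀ f : (Fin 4 → ℕ) → ℂ, ∀ U : ℕ → ℂ,
    (∃ u, Solves S f u ∧ ∀ i, ∀ a ∈ B ∩ proj S i, u i a = U a) ∧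
    ∀ u v, Solves S f u → (∀ i, ∀ a ∈ B ∩ proj S i, u i a = U a) →
      Solves S f v → (∀ i, ∀ a ∈ B ∩ proj S i, v i a = U a) →
      ∀ i, ∀ a ∈ proj S i, u i a = v i a

/-- S is full: a maximal good subset of the product of its projections. -/
def IsFull (S : Set (Fin 4 → ℕ)) : Prop :=
  IsGood S ∧ ∀ T : Set (Fin 4 → ℕ), S ⊆ T → (∀ p ∈ T, ∀ i, p i ∈ proj S i) →
    IsGood T → T = S

/-- Sₙ = {y₁,…,y_N}. -/
def Sn (N : ℕ) : Set (Fin 4 → ℕ) := y '' Set.Icc 1 N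

/-- The infinite set S = {y₁, y₂, …}. -/
def Sinf : Set (Fin 4 → ℕ) := y '' Set.Ici 1

/-- The extra point z = zₙ = (α_{4n−1}, x₂, α_{4n−3}, x₄). -/
def z (n : ℕ) : Fin 4 → ℕ := ![α (4 * n - 1), 1, α (4 * n - 3), 3]

/-- Two points of S are related iff some finite full subset of S contains both. -/
def Related (S : Set (Fin 4 → ℕ)) (p q : Fin 4 → ℕ) : Prop :=
  ∃ K, K ⊆ S ∧ K.Finite ∧ IsFull K ∧ p ∈ K ∧ q ∈ K

/-- The 4n×4n incidence matrix A_{4n}: rows y₂,…,y_{4n},zₙ; columns α₁,…,α_{4n}. -/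
def A (n : ℕ) : Matrix (Fin (4 * n)) (Fin (4 * n)) ℚ :=
  Matrix.of fun i j =>
    if ∃ k, (if (i : ℕ) = 4 * n - 1 then z n else y ((i : ℕ) + 2)) k = (j : ℕ) + 4
    then 1 else 0

namespace Stmt4Aux

lemma yk1 (k : ℕ) (hk : 2 < k) (h : k % 4 = 1) : y k = ![0, α (k - 1), α k, α (k + 1)] := by
  unfold y; rw [if_neg (by omega), if_neg (by omega), h]; rfl
lemma yk2 (k : ℕ) (hk : 2 < k) (h : k % 4 = 2) : y k = ![α (k - 3), 1, α (k - 1), α k] := by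
  unfold y; rw [if_neg (by omega), if_neg (by omega), h]; rfl
lemma yk3 (k : ℕ) (hk : 2 < k) (h : k % 4 = 3) : y k = ![α k, α (k + 1), 2, α (k - 1)] := by
  unfold y; rw [if_neg (by omega), if_neg (by omega), h]; rfl
lemma yk0 (k : ℕ) (hk : 2 < k) (h : k % 4 = 0) : y k = ![α (k - 1), α k, α (k - 3), 3] := by
  unfold y; rw [if_neg (by omega), if_neg (by omega), h]; rfl

/-- `Fx v s` : contribution of symbol `s` to a row sum. -/
def Fx {t : ℕ} (v : Fin t → ℚ) (s : ℕ) : ℚ :=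
  if h : 3 ≤ s ∧ s - 3 < t then v ⟨s - 3, h.2⟩ else 0

/-- `Xv v j` : extension of `v` to all of ℕ by zero. -/
def Xv {t : ℕ} (v : Fin t → ℚ) (j : ℕ) : ℚ :=
  if h : j < t then v ⟨j, h⟩ else 0

lemma Fx_α {t : ℕ} (v : Fin t → ℚ) (j : ℕ) : Fx v (α j) = Xv v j := by
  unfold Fx Xv α
  rcases lt_or_ge j t with h | h
  · rw [dif_pos ⟨by omega, by omega⟩, dif_pos h]
    exact congrArg v (Fin.ext (by simp))
  · rw [dif_neg (by omega), dif_neg (by omega)]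

lemma Fx_small {t : ℕ} (v : Fin t → ℚ) (s : ℕ) (h : s < 3) : Fx v s = 0 := by
  unfold Fx; rw [dif_neg (by omega)]

lemma Fx_three {t : ℕ} (v : Fin t → ℚ) : Fx v 3 = Xv v 0 := Fx_α v 0

lemma Xv_top {t : ℕ} (v : Fin t → ℚ) (s : ℕ) (h : t ≤ s) : Xv v s = 0 := by
  unfold Xv; rw [dif_neg (by omega)]

lemma single_sum {t : ℕ} (x : Fin t → ℚ) (a : ℕ) :
    ∑ j : Fin t, (if a = (j : ℕ) + 3 then (1 : ℚ) else 0) * x j = Fx x a := by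
  unfold Fx
  split
  · next h =>
    rw [Finset.sum_eq_single (⟨a - 3, h.2⟩ : Fin t)]
    · rw [if_pos (by simp; omega), one_mul]
    · intro j _ hj
      rw [if_neg, zero_mul]
      intro hc
      exact hj (by apply Fin.ext; simp; omega)
    · simp
  · next h =>
    apply Finset.sum_eq_zero
    intro j _
    rw [if_neg, zero_mul]
    have := j.isLt
    omega

lemma row_sum {t : ℕ} (x : Fin t → ℚ) (a b c d : ℕ)
    (hab : a ≠ b) (hac : a ≠ c) (had : a ≠ d) (hbc : b ≠ c) (hbd : b ≠ d) (hcd : c ≠ d) :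
    ∑ j : Fin t, (if ∃ k, (![a,b,c,d] : Fin 4 → ℕ) k = (j : ℕ) + 3 then (1 : ℚ) else 0) * x j
      = Fx x a + Fx x b + Fx x c + Fx x d := by
  have key : ∀ j : Fin t,
      (if ∃ k, (![a,b,c,d] : Fin 4 → ℕ) k = (j : ℕ) + 3 then (1 : ℚ) else 0) * x j
      = (if a = (j:ℕ)+3 then (1:ℚ) else 0) * x j + (if b = (j:ℕ)+3 then (1:ℚ) else 0) * x j
        + (if c = (j:ℕ)+3 then (1:ℚ) else 0) * x j + (if d = (j:ℕ)+3 then (1:ℚ) else 0) * x j := by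
    intro j
    have hex : (∃ k, (![a,b,c,d] : Fin 4 → ℕ) k = (j : ℕ) + 3)
        ↔ (a = (j:ℕ)+3 ∨ b = (j:ℕ)+3 ∨ c = (j:ℕ)+3 ∨ d = (j:ℕ)+3) := by
      constructor
      · rintro ⟨k, hk⟩; fin_cases k <;> simp_all
      · rintro (h|h|h|h)
        exacts [⟨0, h⟩, ⟨1, h⟩, ⟨2, h⟩, ⟨3, h⟩]
    rw [if_congr hex rfl rfl]
    by_cases ha : a = (j:ℕ)+3 <;> by_cases hb : b = (j:ℕ)+3 <;>
      by_cases hc : c = (j:ℕ)+3 <;> by_cases hd : d = (j:ℕ)+3 <;> simp_all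
  rw [Finset.sum_congr rfl (fun j _ => key j)]
  simp only [Finset.sum_add_distrib, single_sum]

end Stmt4Aux

open Stmt4Aux

/-- the (2m−1)×(2m−1) matrix N_{2m−1}, obtained from the incidence
matrix of S_{2m−1} by deleting the columns of x₁,x₂,x₃,α_{2m−1},α_{2m}
(remaining columns: x₄ = 3 and α₁,…,α_{2m−2}, i.e. symbol j+3 for column j),
is invertible over ℚ. -/
theorem stmt_4 (m : ℕ) (hm : 1 ≤ m) :
    IsUnit (Matrix.of fun i j : Fin (2 * m - 1) =>
      if ∃ k, y ((i : ℕ) + 1) k = (j : ℕ) + 3 then (1 : ℚ) else 0) := by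
  rw [Matrix.isUnit_iff_isUnit_det, isUnit_iff_ne_zero]
  intro hdet
  obtain ⟨v, hv0, hv⟩ := Matrix.exists_mulVec_eq_zero_iff.mpr hdet
  apply hv0
  have hEq : ∀ a b : ℕ, a = b → Xv v a = Xv v b := fun a b hab => by rw [hab]
  have hrow : ∀ k : ℕ, 1 ≤ k → k ≤ 2*m-1 →
      ∑ j : Fin (2*m-1), (if ∃ k', y k k' = (j : ℕ) + 3 then (1:ℚ) else 0) * v j = 0 := by
    intro k h1 h2
    have h := congrFun hv ⟨k - 1, by omega⟩
    simp only [Matrix.mulVec, dotProduct, Matrix.of_apply, Pi.zero_apply] at h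
    rwa [show k - 1 + 1 = k by omega] at h
  -- row equations
  have E1 : Xv v 0 = 0 := by
    have h := hrow 1 le_rfl (by omega)
    rw [show y 1 = ![0,1,2,3] from rfl,
      row_sum v 0 1 2 3 (by omega) (by omega) (by omega) (by omega) (by omega) (by omega),
      Fx_small v 0 (by omega), Fx_small v 1 (by omega), Fx_small v 2 (by omega),
      Fx_three] at h
    linarith
  have E2 : 2 ≤ 2*m-1 → Xv v 1 + Xv v 2 = 0 := by
    intro h2
    have h := hrow 2 (by omega) h2
    rw [show y 2 = ![0, 1, α 1, α 2] from rfl,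
      row_sum v 0 1 (α 1) (α 2) (by omega) (by unfold α; omega) (by unfold α; omega)
        (by unfold α; omega) (by unfold α; omega) (by unfold α; omega),
      Fx_small v 0 (by omega), Fx_small v 1 (by omega), Fx_α, Fx_α] at h
    linarith
  have EO : ∀ n : ℕ, 1 ≤ n → 4*n+1 ≤ 2*m-1 →
      Xv v (4*n) + Xv v (4*n+1) + Xv v (4*n+2) = 0 := by
    intro n h1 h2
    have h := hrow (4*n+1) (by omega) h2
    rw [yk1 (4*n+1) (by omega) (by omega),
      row_sum v 0 (α (4*n+1-1)) (α (4*n+1)) (α (4*n+1+1)) (by unfold α; omega)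
        (by unfold α; omega) (by unfold α; omega) (by unfold α; omega)
        (by unfold α; omega) (by unfold α; omega),
      Fx_small v 0 (by omega), Fx_α, Fx_α, Fx_α,
      hEq (4*n+1-1) (4*n) (by omega), hEq (4*n+1+1) (4*n+2) (by omega)] at h
    linarith
  have EO' : ∀ n : ℕ, 4*n+3 ≤ 2*m-1 →
      Xv v (4*n+2) + Xv v (4*n+3) + Xv v (4*n+4) = 0 := by
    intro n h2
    have h := hrow (4*n+3) (by omega) h2
    rw [yk3 (4*n+3) (by omega) (by omega),
      row_sum v (α (4*n+3)) (α (4*n+3+1)) 2 (α (4*n+3-1)) (by unfold α; omega)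
        (by unfold α; omega) (by unfold α; omega) (by unfold α; omega)
        (by unfold α; omega) (by unfold α; omega),
      Fx_small v 2 (by omega), Fx_α, Fx_α, Fx_α,
      hEq (4*n+3-1) (4*n+2) (by omega), hEq (4*n+3+1) (4*n+4) (by omega)] at h
    linarith
  have EE : ∀ n : ℕ, 1 ≤ n → 4*n+2 ≤ 2*m-1 →
      Xv v (4*n-1) + Xv v (4*n+1) + Xv v (4*n+2) = 0 := by
    intro n h1 h2
    have h := hrow (4*n+2) (by omega) h2
    rw [yk2 (4*n+2) (by omega) (by omega),
      row_sum v (α (4*n+2-3)) 1 (α (4*n+2-1)) (α (4*n+2)) (by unfold α; omega)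
        (by unfold α; omega) (by unfold α; omega) (by unfold α; omega)
        (by unfold α; omega) (by unfold α; omega),
      Fx_small v 1 (by omega), Fx_α, Fx_α, Fx_α,
      hEq (4*n+2-3) (4*n-1) (by omega), hEq (4*n+2-1) (4*n+1) (by omega)] at h
    linarith
  have EE' : ∀ n : ℕ, 4*n+4 ≤ 2*m-1 →
      Xv v (4*n+1) + Xv v (4*n+3) + Xv v (4*n+4) = 0 := by
    intro n h2
    have h := hrow (4*n+4) (by omega) h2
    rw [yk0 (4*n+4) (by omega) (by omega),
      row_sum v (α (4*n+4-1)) (α (4*n+4)) (α (4*n+4-3)) 3 (by unfold α; omega)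
        (by unfold α; omega) (by unfold α; omega) (by unfold α; omega)
        (by unfold α; omega) (by unfold α; omega),
      Fx_three, Fx_α, Fx_α, Fx_α,
      hEq (4*n+4-1) (4*n+3) (by omega), hEq (4*n+4-3) (4*n+1) (by omega), E1] at h
    linarith
  -- uniform equations
  have hO : ∀ r : ℕ, 1 ≤ r → 2*r+1 ≤ 2*m-1 →
      Xv v (2*r) + Xv v (2*r+1) + Xv v (2*r+2) = 0 := by
    intro r h1 h2
    rcases Nat.even_or_odd r with ⟨n, hn⟩ | ⟨n, hn⟩
    · have h := EO n (by omega) (by omega)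
      rw [hEq (4*n) (2*r) (by omega), hEq (4*n+1) (2*r+1) (by omega),
        hEq (4*n+2) (2*r+2) (by omega)] at h
      exact h
    · have h := EO' n (by omega)
      rw [hEq (4*n+2) (2*r) (by omega), hEq (4*n+3) (2*r+1) (by omega),
        hEq (4*n+4) (2*r+2) (by omega)] at h
      exact h
  have hE : ∀ r : ℕ, 1 ≤ r → 2*r+2 ≤ 2*m-1 →
      Xv v (2*r-1) + Xv v (2*r+1) + Xv v (2*r+2) = 0 := by
    intro r h1 h2
    rcases Nat.even_or_odd r with ⟨n, hn⟩ | ⟨n, hn⟩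
    · have h := EE n (by omega) (by omega)
      rw [hEq (4*n-1) (2*r-1) (by omega), hEq (4*n+1) (2*r+1) (by omega),
        hEq (4*n+2) (2*r+2) (by omega)] at h
      exact h
    · have h := EE' n (by omega)
      rw [hEq (4*n+1) (2*r-1) (by omega), hEq (4*n+3) (2*r+1) (by omega),
        hEq (4*n+4) (2*r+2) (by omega)] at h
      exact h
  have htm1 : Xv v (2*m-1-1) = 0 := by
    rcases Nat.lt_or_ge (2*m-1) 2 with h | h
    · rw [hEq (2*m-1-1) 0 (by omega)]; exact E1
    · have h := hO (m-1) (by omega) (by omega)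
      rw [hEq (2*(m-1)) (2*m-1-1) (by omega), hEq (2*(m-1)+1) (2*m-1) (by omega),
        hEq (2*(m-1)+2) (2*m-1+1) (by omega), Xv_top v (2*m-1) le_rfl,
        Xv_top v (2*m-1+1) (by omega)] at h
      linarith
  have main : ∀ n : ℕ, Xv v (2*n+1) = 0 ∧ Xv v (2*n+2) = 0 := by
    intro n
    induction n using Nat.strong_induction_on with
    | _ n IH =>
    by_cases hn : 2*n+3 ≤ 2*m-1
    · have S : Xv v (2*n+1) + Xv v (2*n+2) = 0 := by
        rcases Nat.eq_zero_or_pos n with h0 | h0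
        · subst h0; simpa using E2 (by omega)
        · obtain ⟨hA, hB⟩ := IH (n-1) (by omega)
          rw [hEq (2*(n-1)+2) (2*n) (by omega)] at hB
          have h := hO n (by omega) (by omega)
          rw [hB] at h
          linarith
      by_cases h2 : 2*n+4 ≤ 2*m-1
      · have hOn := hO (n+1) (by omega) (by omega)
        have hEn := hE (n+1) (by omega) (by omega)
        rw [hEq (2*(n+1)) (2*n+2) (by omega), hEq (2*(n+1)+1) (2*n+3) (by omega),
          hEq (2*(n+1)+2) (2*n+4) (by omega)] at hOn
        rw [hEq (2*(n+1)-1) (2*n+1) (by omega), hEq (2*(n+1)+1) (2*n+3) (by omega),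
          hEq (2*(n+1)+2) (2*n+4) (by omega)] at hEn
        constructor <;> linarith
      · have hB : Xv v (2*n+2) = 0 := by
          rw [hEq (2*n+2) (2*m-1-1) (by omega)]; exact htm1
        exact ⟨by linarith, hB⟩
    · have h1 : 2*m-1 ≤ 2*n+1 := by omega
      exact ⟨Xv_top v _ h1, Xv_top v _ (by omega)⟩
  funext j
  show v j = 0
  have hj : (j : ℕ) < 2*m-1 := j.isLt
  have hXj : Xv v (j : ℕ) = v j := by
    unfold Xv; rw [dif_pos hj]
  rw [← hXj]
  rcases Nat.eq_zero_or_pos (j : ℕ) with h | h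
  · rw [h]; exact E1
  · rcases Nat.even_or_odd (j : ℕ) with ⟨n, hn⟩ | ⟨n, hn⟩
    · rw [hEq (j:ℕ) (2*(n-1)+2) (by omega)]; exact (main (n-1)).2
    · rw [hEq (j:ℕ) (2*n+1) (by omega)]; exact (main n).1
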